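/- For the Morgenstern type bivariate uniform distribution on (0,θ₁)×(0,θ₂), the cumulative past inaccuracy I(F_{Y_{[r:n]}}, F_Y) = θ₂/4 + α((n−2r+1)/(n+1))·(5θ₂/36). In particular CE(Y) = θ₂/4 and ∫₀^{θ₂} F²(y) log F(y) dy = −θ₂/9 for Y uniform on (0,θ₂). -/

import Mathlib

open MeasureTheory Real Set intervalIntegral

lemma pow_mul_log_cont (m : ℕ) : Continuous (fun u : ℝ => u ^ (m+1) * Real.log u) := by
  have h : Continuous fun u : ℝ => u ^ m * (u * Real.log u) :=
    (continuous_pow m).mul Real.continuous_mul_log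
  convert h using 2 with u
  ring

lemma int01 (m : ℕ) : ∫ u in (0:ℝ)..1, u ^ (m+1) * Real.log u = -1 / ((m:ℝ)+2)^2 := by
  have hm : ((m:ℝ)+2) ≠ 0 := by positivity
  set H : ℝ → ℝ := fun u => u ^ (m+2) * Real.log u / ((m:ℝ)+2) - u ^ (m+2) / ((m:ℝ)+2)^2 with hH
  have hcont : ContinuousOn H (Icc 0 1) := by
    apply Continuous.continuousOn
    exact ((pow_mul_log_cont (m+1)).div_const _).sub ((continuous_pow (m+2)).div_const _)
  have hderiv : ∀ x ∈ Ioo (0:ℝ) 1, HasDerivWithinAt H (x ^ (m+1) * Real.log x) (Ioi x) x := by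
    intro x hx
    have hx0 : x ≠ 0 := ne_of_gt hx.1
    have h1 : HasDerivAt (fun u : ℝ => u ^ (m+2) * Real.log u)
        (((m:ℝ)+2) * x ^ (m+1) * Real.log x + x ^ (m+2) * x⁻¹) x := by
      have := (hasDerivAt_pow (m+2) x).mul (Real.hasDerivAt_log hx0)
      refine this.congr_deriv ?_
      push_cast
      ring
    have h2 : HasDerivAt H (x ^ (m+1) * Real.log x) x := by
      have := (h1.div_const ((m:ℝ)+2)).sub ((hasDerivAt_pow (m+2) x).div_const (((m:ℝ)+2)^2))
      refine this.congr_deriv ?_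
      push_cast
      field_simp
      ring
    exact h2.hasDerivWithinAt
  have hint : IntervalIntegrable (fun u : ℝ => u ^ (m+1) * Real.log u) volume 0 1 :=
    (pow_mul_log_cont m).intervalIntegrable 0 1
  have key := intervalIntegral.integral_eq_sub_of_hasDeriv_right_of_le zero_le_one
    hcont hderiv hint
  rw [key, hH]
  simp [Real.log_one]
  field_simp

lemma key_integrable (θ : ℝ) (hθ : 0 < θ) (m : ℕ) :
    IntegrableOn (fun y : ℝ => (min (y/θ) 1) ^ (m+1) * Real.log (min (y/θ) 1)) (Ioi 0) := by
  rw [← Ioc_union_Ioi_eq_Ioi hθ.le]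
  apply IntegrableOn.union
  · have hg : IntegrableOn (fun y : ℝ => (y/θ) ^ (m+1) * Real.log (y/θ)) (Ioc 0 θ) :=
      (((pow_mul_log_cont m).comp (continuous_id.div_const θ))).integrableOn_Ioc
    apply hg.congr_fun _ measurableSet_Ioc
    intro y hy
    beta_reduce
    have : y / θ ≤ 1 := (div_le_one hθ).2 hy.2
    rw [min_eq_left this]
  · have : IntegrableOn (fun _ : ℝ => (0:ℝ)) (Ioi θ) := integrableOn_zero
    apply this.congr_fun _ measurableSet_Ioi
    intro y hy
    beta_reduce
    have : (1:ℝ) ≤ y / θ := (one_le_div hθ).2 (le_of_lt hy)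
    rw [min_eq_right this]
    simp

lemma key_int (θ : ℝ) (hθ : 0 < θ) (m : ℕ) :
    ∫ y in Ioi (0:ℝ), (min (y/θ) 1) ^ (m+1) * Real.log (min (y/θ) 1)
      = -θ / ((m:ℝ)+2)^2 := by
  have hsplit := Ioc_union_Ioi_eq_Ioi hθ.le (a := (0:ℝ))
  have hint := key_integrable θ hθ m
  rw [← hsplit] at hint ⊢
  rw [setIntegral_union (Ioc_disjoint_Ioi le_rfl) measurableSet_Ioi
    (hint.mono_set subset_union_left) (hint.mono_set subset_union_right)]
  have h2 : ∫ y in Ioi θ, (min (y/θ) 1) ^ (m+1) * Real.log (min (y/θ) 1) = 0 := by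
    rw [setIntegral_congr_fun measurableSet_Ioi (g := fun _ => (0:ℝ))]
    · simp
    · intro y hy
      beta_reduce
      have : (1:ℝ) ≤ y / θ := (one_le_div hθ).2 (le_of_lt hy)
      rw [min_eq_right this]
      simp
  rw [h2, add_zero]
  rw [setIntegral_congr_fun measurableSet_Ioc
      (g := fun y => (y/θ) ^ (m+1) * Real.log (y/θ))]
  · rw [← intervalIntegral.integral_of_le hθ.le]
    rw [intervalIntegral.integral_comp_div (a := 0) (b := θ)
      (f := fun u => u ^ (m+1) * Real.log u) (ne_of_gt hθ)]
    rw [zero_div, div_self (ne_of_gt hθ), int01]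
    rw [smul_eq_mul]
    field_simp
  · intro y hy
    beta_reduce
    have : y / θ ≤ 1 := (div_le_one hθ).2 hy.2
    rw [min_eq_left this]

/-- For the Morgenstern type bivariate uniform distribution (Y uniform on
`(0, θ₂)`), `I(F_{Y[r:n]}, F_Y) = θ₂/4 + α((n−2r+1)/(n+1)) (5θ₂/36)`; in particular
`CE(Y) = θ₂/4` and `∫₀^∞ F² log F = −θ₂/9`. -/
theorem stmt_14 (θ₂ α : ℝ) (hθ : 0 < θ₂) (hα : |α| ≤ 1)
    (n r : ℕ) (hr1 : 1 ≤ r) (hrn : r ≤ n)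
    (F : ℝ → ℝ) (hF : ∀ y, F y = min (y / θ₂) 1)
    (G : ℝ → ℝ)
    (hG : ∀ y, G y = F y * (1 + α * (((n : ℝ) - 2 * r + 1) / ((n : ℝ) + 1)) * (1 - F y))) :
    (-∫ y in Ioi (0:ℝ), G y * log (F y)
        = θ₂ / 4 + α * (((n : ℝ) - 2 * r + 1) / ((n : ℝ) + 1)) * (5 * θ₂ / 36))
    ∧ (-∫ y in Ioi (0:ℝ), F y * log (F y) = θ₂ / 4)
    ∧ (∫ y in Ioi (0:ℝ), (F y) ^ 2 * log (F y) = -θ₂ / 9) := by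
  set c := α * (((n : ℝ) - 2 * r + 1) / ((n : ℝ) + 1)) with hc
  have e1 : ∫ y in Ioi (0:ℝ), F y * log (F y) = -θ₂/4 := by
    have := key_int θ₂ hθ 0
    rw [setIntegral_congr_fun measurableSet_Ioi
        (g := fun y => (min (y/θ₂) 1) ^ (0+1) * Real.log (min (y/θ₂) 1))]
    · rw [this]; norm_num
    · intro y _; beta_reduce; rw [hF]; ring
  have e2 : ∫ y in Ioi (0:ℝ), (F y)^2 * log (F y) = -θ₂/9 := by
    have := key_int θ₂ hθ 1
    rw [setIntegral_congr_fun measurableSet_Ioi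
        (g := fun y => (min (y/θ₂) 1) ^ (1+1) * Real.log (min (y/θ₂) 1))]
    · rw [this]; norm_num
    · intro y _; beta_reduce; rw [hF]
  refine ⟨?_, by rw [e1]; ring, e2⟩
  have hi1 := (key_integrable θ₂ hθ 0).const_mul (1 + c)
  have hi2 := (key_integrable θ₂ hθ 1).const_mul c
  have hdecomp : ∀ y, G y * log (F y)
      = (1 + c) * ((min (y/θ₂) 1) ^ (0+1) * Real.log (min (y/θ₂) 1))
        - c * ((min (y/θ₂) 1) ^ (1+1) * Real.log (min (y/θ₂) 1)) := by
    intro y; rw [hG, hF]; ring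
  rw [setIntegral_congr_fun measurableSet_Ioi (g := fun y =>
      (1 + c) * ((min (y/θ₂) 1) ^ (0+1) * Real.log (min (y/θ₂) 1))
        - c * ((min (y/θ₂) 1) ^ (1+1) * Real.log (min (y/θ₂) 1)))
      (fun y _ => hdecomp y)]
  rw [integral_sub hi1 hi2, MeasureTheory.integral_const_mul, MeasureTheory.integral_const_mul,
    key_int θ₂ hθ 0, key_int θ₂ hθ 1]
  push_cast
  ring
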